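/- Let Γ be a finite group and (V, ρ) a finite-dimensional complex representation of Γ with character γ. Fix g = (g_1,…,g_n) ∈ Γⁿ and s ∈ S_n, and let T be the linear endomorphism of V^{⊗n} determined by T(v_1 ⊗ ⋯ ⊗ v_n) = ρ(g_1)v_{s^{−1}(1)} ⊗ ⋯ ⊗ ρ(g_n)v_{s^{−1}(n)}. Then the trace of T equals the product, over the disjoint cycles (j_1 j_2 ⋯ j_m) of s (fixed points counted as 1-cycles), of γ(g_{j_m} g_{j_{m−1}} ⋯ g_{j_1}). -/

import Mathlib

open Equiv TensorProduct PiTensorProduct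

section CycleTools

variable (n : ℕ) (Γ : Type*) [Group Γ]

/-- the length of the cycle of `s` through `j` (fixed points count as 1-cycles). -/
noncomputable def cycLen (s : Equiv.Perm (Fin n)) (j : Fin n) : ℕ :=
  Set.ncard {k | s.SameCycle j k}

/-- the cycle product `g_{j_m} g_{j_{m-1}} ⋯ g_{j_1}` of the cycle `(j_1 j_2 ⋯ j_m)`
of `s` through `j = j_1` (so `j_{k+1} = s(j_k)`). -/
noncomputable def cycProd (g : Fin n → Γ) (s : Equiv.Perm (Fin n)) (j : Fin n) : Γ :=
  (((List.range (cycLen n s j)).reverse).map fun k => g ((s ^ k) j)).prod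

end CycleTools

section TPBasis

variable {ι : Type*} [Fintype ι] {V : Type*} [AddCommGroup V] [Module ℂ V]

/-- the equivalence splitting off the last tensor factor. -/
noncomputable def splitLast (n : ℕ) (V : Type*) [AddCommGroup V] [Module ℂ V] :
    (⨂[ℂ] _ : Fin (n+1), V) ≃ₗ[ℂ] (⨂[ℂ] _ : Fin n, V) ⊗[ℂ] V :=
  (PiTensorProduct.reindex ℂ (fun _ => V) finSumFinEquiv.symm) ≪≫ₗ
    (PiTensorProduct.tmulEquiv ℂ V).symm ≪≫ₗ
    (TensorProduct.congr (LinearEquiv.refl ℂ _) (PiTensorProduct.subsingletonEquiv (0 : Fin 1)))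

lemma splitLast_tprod (n : ℕ) (v : Fin (n+1) → V) :
    splitLast n V (⨂ₜ[ℂ] i, v i) = (⨂ₜ[ℂ] i : Fin n, v i.castSucc) ⊗ₜ[ℂ] v (Fin.last n) := by
  simp only [splitLast, LinearEquiv.trans_apply, reindex_tprod, tmulEquiv_symm_apply,
    congr_tmul, LinearEquiv.refl_apply, subsingletonEquiv_apply_tprod, Equiv.symm_symm]
  have h1 : (fun i : Fin n => v (finSumFinEquiv (Sum.inl i))) = fun i => v i.castSucc := by
    funext i; exact congrArg v (Fin.ext (by simp))
  have h2 : finSumFinEquiv (Sum.inr (0:Fin 1)) = Fin.last n := Fin.ext (by simp)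
  rw [h1, h2]

/-- basis of the tensor power. -/
noncomputable def tpb (b : Module.Basis ι ℂ V) : (n : ℕ) → Module.Basis (Fin n → ι) ℂ (⨂[ℂ] _ : Fin n, V)
  | 0 => (Module.Basis.singleton (Fin 0 → ι) ℂ).map (PiTensorProduct.isEmptyEquiv (Fin 0)).symm
  | (n+1) => (((tpb b n).tensorProduct b).map (splitLast n V).symm).reindex
      ((Equiv.prodComm _ _).trans (Fin.snocEquiv (fun _ => ι)))

lemma tpb_apply (b : Module.Basis ι ℂ V) (n : ℕ) (f : Fin n → ι) :
    tpb b n f = ⨂ₜ[ℂ] i, b (f i) := by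
  induction n with
  | zero =>
    simp only [tpb, Module.Basis.map_apply, Module.Basis.singleton_apply]
    rw [show (⨂ₜ[ℂ] i : Fin 0, b (f i)) = tprod ℂ (fun i : Fin 0 => b (f i)) from rfl]
    apply (LinearEquiv.symm_apply_eq _).mpr
    simp
  | succ n ih =>
    simp only [tpb, Module.Basis.reindex_apply, Module.Basis.map_apply, Module.Basis.tensorProduct_apply']
    apply (LinearEquiv.symm_apply_eq _).mpr
    rw [splitLast_tprod]
    have hsymm : ((Equiv.prodComm (Fin n → ι) ι).trans (Fin.snocEquiv (fun _ => ι))).symm f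
        = (fun i => f i.castSucc, f (Fin.last n)) := rfl
    rw [hsymm, ih]

lemma trace_lhs (n : ℕ) [DecidableEq ι] (b : Module.Basis ι ℂ V) (φ : Fin n → (V →ₗ[ℂ] V))
    (s : Equiv.Perm (Fin n)) :
    LinearMap.trace ℂ (⨂[ℂ] _ : Fin n, V)
        ((PiTensorProduct.map φ).comp
          (PiTensorProduct.reindex ℂ (fun _ : Fin n => V) (s : Fin n ≃ Fin n)).toLinearMap)
      = ∑ f : Fin n → ι, ∏ i, (LinearMap.toMatrix b b (φ i)) (f i) (f (s.symm i)) := by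
  rw [LinearMap.trace_eq_matrix_trace ℂ (tpb b n), Matrix.trace]
  refine Finset.sum_congr rfl fun f _ => ?_
  rw [Matrix.diag_apply, LinearMap.toMatrix_apply]
  have hT : ((PiTensorProduct.map φ).comp
      (PiTensorProduct.reindex ℂ (fun _ : Fin n => V) (s : Fin n ≃ Fin n)).toLinearMap)
      (tpb b n f) = ⨂ₜ[ℂ] i, (φ i) (b (f (s.symm i))) := by
    rw [tpb_apply, LinearMap.comp_apply, LinearEquiv.coe_toLinearMap, reindex_tprod, map_tprod]
  rw [hT]
  have hexp : ∀ i : Fin n, (φ i) (b (f (s.symm i)))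
      = ∑ a : ι, (LinearMap.toMatrix b b (φ i)) a (f (s.symm i)) • b a := by
    intro i
    simp_rw [LinearMap.toMatrix_apply]
    exact (b.sum_repr _).symm
  rw [show (⨂ₜ[ℂ] i, (φ i) (b (f (s.symm i))))
      = PiTensorProduct.tprod ℂ (fun i => ∑ a : ι, (LinearMap.toMatrix b b (φ i)) a (f (s.symm i)) • b a) by
    exact congrArg _ (funext hexp)]
  rw [MultilinearMap.map_sum (PiTensorProduct.tprod ℂ)]
  simp_rw [MultilinearMap.map_smul_univ]
  rw [map_sum]
  simp_rw [map_smul]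
  have : ∀ p : Fin n → ι, (PiTensorProduct.tprod ℂ) (fun i => b (p i)) = tpb b n p := fun p => (tpb_apply b n p).symm
  simp_rw [this, Module.Basis.repr_self, Finsupp.coe_finset_sum, Finset.sum_apply, Finsupp.coe_smul,
    Pi.smul_apply, Finsupp.single_apply]
  rw [Finset.sum_eq_single f]
  · simp
  · intro p _ hp
    simp [hp]
  · intro h; exact absurd (Finset.mem_univ f) h

end TPBasis

section CycleFacts

variable {n : ℕ}

lemma pow_mod_cycle (s : Equiv.Perm (Fin n)) (k : Fin n) {m : ℕ} (hper : (s ^ m) k = k)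
    (a : ℕ) : (s ^ (a % m)) k = (s ^ a) k := by
  have key : ∀ q r : ℕ, (s ^ (m * q + r)) k = (s ^ r) k := by
    intro q
    induction q with
    | zero => simp
    | succ q ih =>
      intro r
      have h : m * (q + 1) + r = (m * q + r) + m := by ring
      rw [h, pow_add, Equiv.Perm.mul_apply, hper, ih]
  conv_rhs => rw [← Nat.div_add_mod a m]
  exact (key (a / m) (a % m)).symm

lemma cyc_facts (s : Equiv.Perm (Fin n)) (k : Fin n) :
    0 < cycLen n s k ∧ (s ^ cycLen n s k) k = k ∧
      (∀ a b : ℕ, a < cycLen n s k → b < cycLen n s k → (s ^ a) k = (s ^ b) k → a = b) ∧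
      (∀ j, s.SameCycle k j ↔ ∃ t < cycLen n s k, (s ^ t) k = j) := by
  have hN : ∃ d, 0 < d ∧ (s ^ d) k = k := by
    refine ⟨orderOf s, orderOf_pos s, ?_⟩
    rw [pow_orderOf_eq_one]; rfl
  set d := Nat.find hN with hd_def
  obtain ⟨hdpos, hdper⟩ : 0 < d ∧ (s ^ d) k = k := Nat.find_spec hN
  have hinj : ∀ a b : ℕ, a < d → b < d → (s ^ a) k = (s ^ b) k → a = b := by
    intro a b ha hb hab
    by_contra hne
    wlog hlt : a < b generalizing a b
    · exact this b a hb ha hab.symm (Ne.symm hne) (by omega)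
    have hsub : (s ^ (b - a)) k = k := by
      have h1 : (s ^ b) k = (s ^ (b - a)) ((s ^ a) k) := by
        rw [← Equiv.Perm.mul_apply, ← pow_add]
        congr 2
        omega
      have h2 : (s ^ (b - a)) ((s ^ a) k) = (s ^ a) ((s ^ (b - a)) k) := by
        rw [← Equiv.Perm.mul_apply, ← Equiv.Perm.mul_apply, ← pow_add, ← pow_add,
          Nat.add_comm]
      exact ((s ^ a).injective (hab.trans (h1.trans h2))).symm
    exact Nat.find_min hN (m := b - a) (by omega) ⟨by omega, hsub⟩
  have hcover : ∀ j, s.SameCycle k j ↔ ∃ t < d, (s ^ t) k = j := by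
    intro j
    constructor
    · intro h
      obtain ⟨i, _, hi⟩ := h.exists_pow_eq'
      exact ⟨i % d, Nat.mod_lt _ hdpos, by rw [pow_mod_cycle s k hdper]; exact hi⟩
    · rintro ⟨t, _, rfl⟩
      exact ⟨(t : ℤ), by rw [zpow_natCast]⟩
  have hset : {j | s.SameCycle k j} = (fun t => (s ^ t) k) '' (Set.Iio d) := by
    ext j
    simp only [Set.mem_setOf_eq, Set.mem_image, Set.mem_Iio, hcover j]
  have hlen : cycLen n s k = d := by
    have hinj' : Set.InjOn (fun t => (s ^ t) k) (Set.Iio d) :=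
      fun a ha b hb hab => hinj a b ha hb hab
    rw [cycLen, hset, Set.ncard_image_of_injOn hinj', ← Finset.coe_Iio,
      Set.ncard_coe_finset, Nat.card_Iio]
  rw [hlen]
  exact ⟨hdpos, hdper, hinj, hcover⟩

end CycleFacts

section MatrixPath

variable {ι : Type*} [Fintype ι] [DecidableEq ι]

/-- the value of a path with endpoints `y` (at `0`) and `x` (at `≥ m+1`). -/
def pathVal {m : ℕ} (x y : ι) (p : Fin m → ι) : ℕ → ι :=
  fun u => if u = 0 then y else if h : u - 1 < m then p ⟨u - 1, h⟩ else x

lemma pathVal_snoc {m : ℕ} (x y z : ι) (p : Fin m → ι) (u : ℕ) (hu : u ≤ m + 1) :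
    pathVal x y (Fin.snoc p z) u = pathVal z y p u := by
  rcases Nat.eq_zero_or_pos u with h0 | h0
  · simp [pathVal, h0]
  rcases Nat.lt_or_ge (u - 1) m with hlt | hge
  · have h1 : u - 1 < m + 1 := by omega
    simp only [pathVal, dif_pos hlt, dif_pos h1, if_neg (by omega : ¬ u = 0)]
    simp [Fin.snoc, hlt]
  · have h1 : u - 1 = m := by omega
    simp only [pathVal, if_neg (by omega : ¬ u = 0), dif_neg (by omega : ¬ u - 1 < m),
      dif_pos (by omega : u - 1 < m + 1)]
    simp [Fin.snoc, h1]

lemma pathVal_top {m : ℕ} (x y : ι) (p : Fin m → ι) : pathVal x y p (m + 1) = x := by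
  simp [pathVal]

lemma prod_entry (A : ℕ → Matrix ι ι ℂ) :
    ∀ (m : ℕ) (x y : ι),
      (((List.range (m + 1)).reverse.map A).prod) x y
        = ∑ p : Fin m → ι, ∏ t ∈ Finset.range (m + 1),
            A t (pathVal x y p (t + 1)) (pathVal x y p t) := by
  intro m
  induction m with
  | zero =>
    intro x y
    have h1 : ((List.range 1).reverse.map A).prod = A 0 := by
      simp [List.range_succ]
    rw [h1]
    rw [Finset.sum_eq_single (fun i : Fin 0 => i.elim0)]
    · simp [pathVal]
    · intro p _ hp
      exact absurd (funext fun i => i.elim0) hp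
    · intro h; exact absurd (Finset.mem_univ _) h
  | succ m ih =>
    intro x y
    have h1 : ((List.range (m + 2)).reverse.map A).prod
        = A (m + 1) * ((List.range (m + 1)).reverse.map A).prod := by
      rw [List.range_succ]
      simp
    rw [h1, Matrix.mul_apply]
    have hRHS : ∑ p' : Fin (m + 1) → ι, ∏ t ∈ Finset.range (m + 2),
          A t (pathVal x y p' (t + 1)) (pathVal x y p' t)
        = ∑ z : ι, ∑ p : Fin m → ι, A (m + 1) x z
            * ∏ t ∈ Finset.range (m + 1), A t (pathVal z y p (t + 1)) (pathVal z y p t) := by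
      rw [← Equiv.sum_comp (Fin.snocEquiv (fun _ => ι))
        (fun p' => ∏ t ∈ Finset.range (m + 2), A t (pathVal x y p' (t + 1)) (pathVal x y p' t)),
        Fintype.sum_prod_type]
      refine Finset.sum_congr rfl fun z _ => Finset.sum_congr rfl fun p _ => ?_
      have he : (Fin.snocEquiv (fun _ : Fin (m + 1) => ι)) (z, p) = Fin.snoc p z := rfl
      rw [he, Finset.prod_range_succ]
      have h2 : ∀ t ∈ Finset.range (m + 1),
          A t (pathVal x y (Fin.snoc p z) (t + 1)) (pathVal x y (Fin.snoc p z) t)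
            = A t (pathVal z y p (t + 1)) (pathVal z y p t) := by
        intro t ht
        rw [Finset.mem_range] at ht
        rw [pathVal_snoc x y z p (t + 1) (by omega), pathVal_snoc x y z p t (by omega)]
      rw [Finset.prod_congr rfl h2,
        show m + 1 + 1 = (m + 1) + 1 from rfl,
        pathVal_top x y (Fin.snoc p z), pathVal_snoc x y z p (m + 1) (by omega),
        pathVal_top z y p, mul_comm]
    rw [hRHS]
    refine Finset.sum_congr rfl fun z _ => ?_
    rw [ih z y, Finset.mul_sum]

lemma trace_prod_eq (A : ℕ → Matrix ι ι ℂ) (m : ℕ) (hm : 0 < m) :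
    Matrix.trace (((List.range m).reverse.map A).prod)
      = ∑ r : Fin m → ι, ∏ t ∈ Finset.range m,
          A t (r ⟨(t + 1) % m, Nat.mod_lt _ hm⟩) (r ⟨t % m, Nat.mod_lt _ hm⟩) := by
  obtain ⟨m', rfl⟩ : ∃ m', m = m' + 1 := ⟨m - 1, by omega⟩
  have hmod : ∀ (x : ι) (p : Fin m' → ι) (u : ℕ), u ≤ m' + 1 →
      pathVal x x p u
        = (Fin.cons x p : Fin (m' + 1) → ι) ⟨u % (m' + 1), Nat.mod_lt _ (Nat.succ_pos m')⟩ := by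
    intro x p u hu
    rcases Nat.eq_zero_or_pos u with h0 | h0
    · subst h0
      have h : (⟨0 % (m' + 1), Nat.mod_lt _ (Nat.succ_pos m')⟩ : Fin (m' + 1)) = 0 := by
        apply Fin.ext; simp
      rw [h, Fin.cons_zero]
      simp [pathVal]
    rcases Nat.lt_or_ge u (m' + 1) with hlt | hge
    · have hu1 : u - 1 < m' := by omega
      simp only [pathVal, if_neg (by omega : ¬ u = 0), dif_pos hu1]
      have h : (⟨u % (m' + 1), Nat.mod_lt _ (Nat.succ_pos m')⟩ : Fin (m' + 1))
          = Fin.succ ⟨u - 1, hu1⟩ := by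
        apply Fin.ext
        simp only [Fin.val_succ]
        rw [Nat.mod_eq_of_lt hlt]
        omega
      rw [h, Fin.cons_succ]
    · have hu1 : u = m' + 1 := by omega
      subst hu1
      rw [pathVal_top]
      have h : (⟨(m' + 1) % (m' + 1), Nat.mod_lt _ (Nat.succ_pos m')⟩ : Fin (m' + 1)) = 0 := by
        apply Fin.ext; simp
      rw [h, Fin.cons_zero]
  rw [Matrix.trace]
  simp_rw [Matrix.diag_apply, prod_entry A m']
  rw [← Equiv.sum_comp (Fin.consEquiv (fun _ => ι))
    (fun r => ∏ t ∈ Finset.range (m' + 1),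
      A t (r ⟨(t + 1) % (m' + 1), Nat.mod_lt _ (Nat.succ_pos m')⟩)
        (r ⟨t % (m' + 1), Nat.mod_lt _ (Nat.succ_pos m')⟩)),
    Fintype.sum_prod_type]
  refine Finset.sum_congr rfl fun x _ => ?_
  refine Finset.sum_congr rfl fun p _ => ?_
  refine Finset.prod_congr rfl fun t ht => ?_
  rw [Finset.mem_range] at ht
  have he : (Fin.consEquiv (fun _ : Fin (m' + 1) => ι)) (x, p) = Fin.cons x p := rfl
  rw [he, hmod x p (t + 1) (by omega), hmod x p t (by omega)]

end MatrixPath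

section ShiftLemmas

variable {n : ℕ}

lemma pow_shift_fwd (s : Equiv.Perm (Fin n)) (k : Fin n) {m : ℕ} (hper : (s ^ m) k = k)
    (hpos : 0 < m) (t : ℕ) (ht : t < m) :
    (s ^ ((((t + 1) % m) + m - 1) % m)) k = (s ^ t) k := by
  rcases Nat.lt_or_ge (t + 1) m with hlt | hge
  · have e : (((t + 1) % m) + m - 1) % m = t := by
      rw [Nat.mod_eq_of_lt hlt, show t + 1 + m - 1 = t + m by omega, Nat.add_mod_right,
        Nat.mod_eq_of_lt ht]
    rw [e]
  · have h1 : t + 1 = m := by omega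
    have e : (((t + 1) % m) + m - 1) % m = t := by
      rw [h1, Nat.mod_self, Nat.zero_add, Nat.mod_eq_of_lt (by omega)]
      omega
    rw [e]

lemma pow_shift_back (s : Equiv.Perm (Fin n)) (k : Fin n) {m : ℕ} (hper : (s ^ m) k = k)
    (hpos : 0 < m) (t : ℕ) (ht : t < m) :
    (s ^ ((t + m - 1) % m)) k = s.symm ((s ^ t) k) := by
  have h : s ((s ^ ((t + m - 1) % m)) k) = (s ^ t) k := by
    rw [← Equiv.Perm.mul_apply, ← pow_succ']
    rcases Nat.eq_zero_or_pos t with rfl | htpos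
    · have e : (0 + m - 1) % m + 1 = m := by
        rw [Nat.mod_eq_of_lt (by omega)]; omega
      rw [e, hper, pow_zero, Equiv.Perm.one_apply]
    · have e : (t + m - 1) % m + 1 = t := by
        rw [show t + m - 1 = (t - 1) + m by omega, Nat.add_mod_right,
          Nat.mod_eq_of_lt (by omega)]
        omega
      rw [e]
  rw [← h, Equiv.symm_apply_apply]

lemma mod_shift_cancel {M u : ℕ} (hM : 0 < M) (hu : u < M) :
    ((u + M - 1) % M + 1) % M = u := by
  rcases Nat.eq_zero_or_pos u with rfl | hu0
  · have h1 : (0 + M - 1) % M = M - 1 := by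
      rw [Nat.zero_add]
      exact Nat.mod_eq_of_lt (by omega)
    rw [h1, Nat.sub_add_cancel hM, Nat.mod_self]
  · have h1 : (u + M - 1) % M = u - 1 := by
      rw [show u + M - 1 = (u - 1) + M by omega, Nat.add_mod_right]
      exact Nat.mod_eq_of_lt (by omega)
    rw [h1, Nat.sub_add_cancel hu0]
    exact Nat.mod_eq_of_lt hu

lemma pi_congr_fin {κ : Sort*} (d : κ → ℕ) {γ : Type*} (p : ∀ k, Fin (d k) → γ)
    {k k' : κ} (h : k = k') (u : Fin (d k)) (u' : Fin (d k')) (hval : (u : ℕ) = (u' : ℕ)) :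
    p k u = p k' u' := by
  subst h
  exact congrArg _ (Fin.ext hval)

end ShiftLemmas

/-- **Proposition.** For a representation `(V, ρ)` of `Γ` with character `γ`, `g ∈ Γⁿ` and
`s ∈ S_n`, let `T` be the endomorphism of `V^{⊗n}` with
`T(v_1 ⊗ ⋯ ⊗ v_n) = ρ(g_1)v_{s⁻¹(1)} ⊗ ⋯ ⊗ ρ(g_n)v_{s⁻¹(n)}`.  Then
`tr T = ∏ γ(g_{j_m} ⋯ g_{j_1})`, the product being over the disjoint cycles of `s`
(fixed points counted as 1-cycles), here encoded by a transversal `R` of the cycles. -/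
theorem trace_tensor_power (n : ℕ) (Γ : Type*) [Group Γ] [Finite Γ]
    (V : Type*) [AddCommGroup V] [Module ℂ V] [FiniteDimensional ℂ V]
    (ρ : Representation ℂ Γ V)
    (g : Fin n → Γ) (s : Equiv.Perm (Fin n))
    (R : Finset (Fin n)) (hR : ∀ j : Fin n, ∃! k : Fin n, k ∈ R ∧ s.SameCycle j k) :
    LinearMap.trace ℂ (⨂[ℂ] _ : Fin n, V)
        ((PiTensorProduct.map fun i : Fin n => ρ (g i)).comp
          (PiTensorProduct.reindex ℂ (fun _ : Fin n => V) (s : Fin n ≃ Fin n)).toLinearMap)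
      = ∏ k ∈ R, LinearMap.trace ℂ V (ρ (cycProd n Γ g s k)) := by
    classical
  let ι := Module.Free.ChooseBasisIndex ℂ V
  let b : Module.Basis ι ℂ V := Module.Free.chooseBasis ℂ V
  set Amat : Fin n → Matrix ι ι ℂ := fun i => LinearMap.toMatrix b b (ρ (g i)) with hAmat
  set m : Fin n → ℕ := fun k => cycLen n s k with hm
  have hpos : ∀ k, 0 < m k := fun k => (cyc_facts s k).1
  have hper : ∀ k, (s ^ m k) k = k := fun k => (cyc_facts s k).2.1
  have hinj : ∀ k, ∀ a b' : ℕ, a < m k → b' < m k → (s ^ a) k = (s ^ b') k → a = b' :=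
    fun k => (cyc_facts s k).2.2.1
  have hcover : ∀ k j, s.SameCycle k j ↔ ∃ t < m k, (s ^ t) k = j :=
    fun k => (cyc_facts s k).2.2.2
  -- LHS
  rw [trace_lhs n b (fun i => ρ (g i)) s]
  -- RHS per cycle
  have hRk : ∀ k : Fin n, LinearMap.trace ℂ V (ρ (cycProd n Γ g s k))
      = ∑ r : Fin (m k) → ι, ∏ t ∈ Finset.range (m k),
          Amat ((s ^ t) k) (r ⟨(t + 1) % m k, Nat.mod_lt _ (hpos k)⟩)
            (r ⟨t % m k, Nat.mod_lt _ (hpos k)⟩) := by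
    intro k
    rw [LinearMap.trace_eq_matrix_trace ℂ b]
    have hlist : ∀ l : List Γ, LinearMap.toMatrix b b (ρ l.prod)
        = (l.map fun x => LinearMap.toMatrix b b (ρ x)).prod := by
      intro l
      induction l with
      | nil => simp
      | cons a l ih =>
        rw [List.prod_cons, _root_.map_mul, List.map_cons, List.prod_cons, ← ih]
        exact LinearMap.toMatrix_mul b _ _
    rw [cycProd, hlist, List.map_map]
    exact trace_prod_eq (fun t => Amat ((s ^ t) k)) (m k) (hpos k)
  -- choice functions
  choose rep hrep using hR
  have hrepR : ∀ j, rep j ∈ R := fun j => (hrep j).1.1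
  have hrepC : ∀ j, s.SameCycle j (rep j) := fun j => (hrep j).1.2
  have hrepU : ∀ j y, y ∈ R → s.SameCycle j y → y = rep j := fun j y h1 h2 => (hrep j).2 y ⟨h1, h2⟩
  have hex : ∀ i, ∃ t, t < m (rep i) ∧ (s ^ t) (rep i) = i := by
    intro i
    obtain ⟨t, ht1, ht2⟩ := (hcover (rep i) i).mp (hrepC i).symm
    exact ⟨t, ht1, ht2⟩
  choose tf htf1 htf2 using hex
  have hrep_pow : ∀ k : Fin n, k ∈ R → ∀ a : ℕ, rep ((s ^ a) k) = k := by
    intro k hk a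
    exact (hrepU ((s ^ a) k) k hk
      (Equiv.Perm.SameCycle.symm ⟨(a : ℤ), by rw [zpow_natCast]⟩)).symm
  have htf_pow : ∀ k : Fin n, k ∈ R → ∀ a : ℕ, a < m k → tf ((s ^ a) k) = a := by
    intro k hk a ha
    have h1 : rep ((s ^ a) k) = k := hrep_pow k hk a
    have h2 := htf2 ((s ^ a) k)
    rw [h1] at h2
    have h3 := htf1 ((s ^ a) k)
    rw [h1] at h3
    exact hinj k _ a h3 ha h2
  -- RHS transform
  have hRHS : ∏ k ∈ R, LinearMap.trace ℂ V (ρ (cycProd n Γ g s k))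
      = ∑ p : (∀ k : {x // x ∈ R}, Fin (m ↑k) → ι),
          ∏ k : {x // x ∈ R}, ∏ t ∈ Finset.range (m ↑k),
            Amat ((s ^ t) ↑k) (p k ⟨(t + 1) % m ↑k, Nat.mod_lt _ (hpos ↑k)⟩)
              (p k ⟨t % m ↑k, Nat.mod_lt _ (hpos ↑k)⟩) := by
    rw [← Finset.prod_coe_sort]
    simp_rw [hRk]
    rw [Finset.prod_univ_sum (fun k : {x // x ∈ R} => (Finset.univ : Finset (Fin (m ↑k) → ι)))]
    rw [Fintype.piFinset_univ]
  rw [hRHS]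
  -- the bijection between functions and collections of cycle data
  refine Finset.sum_nbij'
    (fun (f : Fin n → ι) => fun (k : {x // x ∈ R}) (u : Fin (m ↑k)) =>
      f ((s ^ (((u : ℕ) + m ↑k - 1) % m ↑k)) ↑k))
    (fun p => fun i : Fin n =>
      p ⟨rep i, hrepR i⟩ ⟨(tf i + 1) % m (rep i), Nat.mod_lt _ (hpos (rep i))⟩)
    (fun _ _ => Finset.mem_univ _) (fun _ _ => Finset.mem_univ _) ?_ ?_ ?_
  · -- left inverse
    intro f _
    funext i
    show f ((s ^ ((((tf i + 1) % m (rep i)) + m (rep i) - 1) % m (rep i))) (rep i)) = f i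
    rw [pow_shift_fwd s (rep i) (hper (rep i)) (hpos (rep i)) (tf i) (htf1 i), htf2 i]
  · -- right inverse
    intro p _
    funext k u
    have ha : ((u : ℕ) + m ↑k - 1) % m ↑k < m ↑k := Nat.mod_lt _ (hpos ↑k)
    set a := ((u : ℕ) + m ↑k - 1) % m ↑k with hadef
    have hrepj : rep ((s ^ a) ↑k) = ↑k := hrep_pow ↑k k.2 a
    have htfj : tf ((s ^ a) ↑k) = a := htf_pow ↑k k.2 a ha
    refine pi_congr_fin (fun k : {x // x ∈ R} => m ↑k) p (Subtype.ext hrepj) _ u ?_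
    show (tf ((s ^ a) ↑k) + 1) % m (rep ((s ^ a) ↑k)) = (u : ℕ)
    rw [htfj, hrepj]
    exact mod_shift_cancel (hpos ↑k) u.isLt
  · -- the products match
    intro f _
    rw [Finset.prod_sigma' (Finset.univ : Finset {x // x ∈ R})
      (fun k => Finset.range (m ↑k))]
    refine (Finset.prod_bij (fun (q : Σ k : {x // x ∈ R}, ℕ) _ => (s ^ q.2) ↑q.1)
      ?_ ?_ ?_ ?_).symm
    · intro q _; exact Finset.mem_univ _
    · intro q hq q' hq' heq
      have heq' : (s ^ q.2) (↑q.1 : Fin n) = (s ^ q'.2) ↑q'.1 := heq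
      rw [Finset.mem_sigma] at hq hq'
      have hsc : s.SameCycle ((s ^ q.2) ↑q.1) ↑q.1 :=
        (Equiv.Perm.SameCycle.symm ⟨(q.2 : ℤ), by rw [zpow_natCast]⟩)
      have hsc' : s.SameCycle ((s ^ q.2) ↑q.1) ↑q'.1 := by
        rw [heq']
        exact (Equiv.Perm.SameCycle.symm ⟨(q'.2 : ℤ), by rw [zpow_natCast]⟩)
      have h1 : (↑q.1 : Fin n) = ↑q'.1 := by
        rw [hrepU _ _ q.1.2 hsc, hrepU _ _ q'.1.2 hsc']
      have hk : q.1 = q'.1 := Subtype.ext h1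
      obtain ⟨k1, t1⟩ := q
      obtain ⟨k2, t2⟩ := q'
      cases hk
      have : t1 = t2 := by
        refine hinj ↑k1 t1 t2 ?_ ?_ heq'
        · exact Finset.mem_range.mp hq.2
        · exact Finset.mem_range.mp hq'.2
      rw [this]
    · intro i _
      refine ⟨⟨⟨rep i, hrepR i⟩, tf i⟩, ?_, htf2 i⟩
      rw [Finset.mem_sigma]
      exact ⟨Finset.mem_univ _, Finset.mem_range.mpr (htf1 i)⟩
    · intro q hq
      rw [Finset.mem_sigma, Finset.mem_range] at hq
      obtain ⟨k, t⟩ := q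
      have ht : t < m ↑k := hq.2
      show Amat ((s ^ t) ↑k)
          (f ((s ^ ((((t + 1) % m ↑k) + m ↑k - 1) % m ↑k)) ↑k))
          (f ((s ^ (((t % m ↑k) + m ↑k - 1) % m ↑k)) ↑k))
        = Amat ((s ^ t) ↑k) (f ((s ^ t) ↑k)) (f (s.symm ((s ^ t) ↑k)))
      rw [pow_shift_fwd s ↑k (hper ↑k) (hpos ↑k) t ht, Nat.mod_eq_of_lt ht,
        pow_shift_back s ↑k (hper ↑k) (hpos ↑k) t ht]
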